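/- Differentiability of the equilibrium map at non-degenerate parameters: fix capacities α_j > 0, delays d_{ij}, demands D_i > 0, perceived values b_j ∈ ℝ, and weights w_p, w_d ∈ ℝ, w_q > 0, and let F*(p) denote the unique Nash equilibrium as a function of the price vector p ∈ ℝ^m. Suppose at p₀ the equilibrium satisfies strict complementarity: for every user i there is λ_i ∈ ℝ with M_{ij}(F*(p₀)) = λ_i for all j with f*_{ij}(p₀) > 0, and M_{ij}(F*(p₀)) > λ_i for all j with f*_{ij}(p₀) = 0, where M_{ij}(F) = w_p p_j + w_d d_{ij} − b_j + (w_q/α_j)·(Σ_k f_{kj} + f_{ij}). Then p ↦ F*(p) is continuously differentiable on a neighborhood of p₀. -/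

import Mathlib

open Finset

noncomputable section

namespace PriLLM

/-- The set `Δᵢ` of feasible allocations for a user with total demand `Di`:
nonnegative vectors in `ℝ^m` whose coordinates sum to `Di`. -/
def simplex {m : ℕ} (Di : ℝ) : Set (Fin m → ℝ) :=
  {f | (∀ j, 0 ≤ f j) ∧ ∑ j, f j = Di}

/-- User `i`'s routing cost `Cᵢ(F) = Σⱼ fᵢⱼ (wₚ pⱼ + w_q Qⱼ(F) + w_d dᵢⱼ − bⱼ)`,
where `Qⱼ(F) = (Σₖ fₖⱼ)/αⱼ` is the congestion factor of provider `j`. -/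
def cost {n m : ℕ} (wp wq wd : ℝ) (p b α : Fin m → ℝ)
    (d : Fin n → Fin m → ℝ) (F : Fin n → Fin m → ℝ) (i : Fin n) : ℝ :=
  ∑ j, F i j * (wp * p j + wq * ((∑ k, F k j) / α j) + wd * d i j - b j)

/-- User `i`'s marginal cost on provider `j`:
`Mᵢⱼ(F) = wₚ pⱼ + w_d dᵢⱼ − bⱼ + (w_q/αⱼ)(Σₖ fₖⱼ + fᵢⱼ)`. -/
def marginal {n m : ℕ} (wp wq wd : ℝ) (p b α : Fin m → ℝ)
    (d : Fin n → Fin m → ℝ) (F : Fin n → Fin m → ℝ) (i : Fin n) (j : Fin m) : ℝ :=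
  wp * p j + wd * d i j - b j + (wq / α j) * ((∑ k, F k j) + F i j)

/-- Differentiability of the equilibrium map at non-degenerate parameters: if
the unique equilibrium `F*(p₀)` satisfies strict complementarity at the price
vector `p₀`, then `p ↦ F*(p)` is continuously differentiable on a neighborhood
of `p₀`. The equilibrium map `Feq` is characterized by the hypotheses that
`Feq p` is a Nash equilibrium for every `p` and that every Nash equilibrium
coincides with it. -/
lemma sum_update_apply {n m : ℕ} (G : Fin n → Fin m → ℝ) (i : Fin n) (g : Fin m → ℝ) (j : Fin m) :
    ∑ k, Function.update G i g k j = (∑ k, G k j) - G i j + g j := by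
  classical
  calc ∑ k, Function.update G i g k j = ∑ k, (if k = i then g j else G k j) :=
        Finset.sum_congr rfl fun k _ => by rw [Function.update_apply]; split <;> rfl
    _ = g j + ∑ k ∈ Finset.univ.erase i, G k j := by
        rw [← Finset.add_sum_erase _ _ (Finset.mem_univ i), if_pos rfl]
        congr 1
        exact Finset.sum_congr rfl fun k hk => if_neg (Finset.ne_of_mem_erase hk)
    _ = _ := by rw [Finset.sum_erase_eq_sub (Finset.mem_univ i)]; ring

lemma kkt_best {n m : ℕ} (wp wd wq : ℝ) (hwq : 0 ≤ wq) (p b α : Fin m → ℝ)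
    (hα : ∀ j, 0 < α j) (d : Fin n → Fin m → ℝ) (G : Fin n → Fin m → ℝ)
    (i : Fin n) (lam : ℝ)
    (hM : ∀ j, lam ≤ marginal wp wq wd p b α d G i j)
    (hMeq : ∀ j, 0 < G i j → marginal wp wq wd p b α d G i j = lam)
    (hG0 : ∀ j, 0 ≤ G i j)
    (g : Fin m → ℝ) (hg0 : ∀ j, 0 ≤ g j) (hgsum : ∑ j, g j = ∑ j, G i j) :
    cost wp wq wd p b α d G i ≤ cost wp wq wd p b α d (Function.update G i g) i := by
  have key : cost wp wq wd p b α d (Function.update G i g) i - cost wp wq wd p b α d G i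
      = ∑ j, ((g j - G i j) * marginal wp wq wd p b α d G i j
          + (wq / α j) * (g j - G i j) ^ 2) := by
    unfold cost marginal
    rw [← Finset.sum_sub_distrib]
    refine Finset.sum_congr rfl fun j _ => ?_
    rw [sum_update_apply G i g j, Function.update_self]
    have h1 : α j ≠ 0 := ne_of_gt (hα j)
    field_simp
    ring
  have h1 : 0 ≤ ∑ j, (g j - G i j) * marginal wp wq wd p b α d G i j := by
    have e1 : ∀ j, (g j - G i j) * marginal wp wq wd p b α d G i j
        = (g j * (marginal wp wq wd p b α d G i j - lam)
          - G i j * (marginal wp wq wd p b α d G i j - lam)) + lam * (g j - G i j) := by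
      intro j; ring
    rw [Finset.sum_congr rfl fun j _ => e1 j, Finset.sum_add_distrib,
        Finset.sum_sub_distrib]
    have h2 : ∑ j, G i j * (marginal wp wq wd p b α d G i j - lam) = 0 := by
      refine Finset.sum_eq_zero fun j _ => ?_
      rcases (hG0 j).lt_or_eq with h | h
      · rw [hMeq j h]; ring
      · rw [← h]; ring
    have h3 : 0 ≤ ∑ j, g j * (marginal wp wq wd p b α d G i j - lam) :=
      Finset.sum_nonneg fun j _ => mul_nonneg (hg0 j) (sub_nonneg.2 (hM j))
    have h4 : ∑ j, lam * (g j - G i j) = 0 := by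
      rw [← Finset.mul_sum, Finset.sum_sub_distrib, hgsum]; ring
    linarith
  have h2 : 0 ≤ ∑ j, (wq / α j) * (g j - G i j) ^ 2 :=
    Finset.sum_nonneg fun j _ =>
      mul_nonneg (div_nonneg hwq (hα j).le) (sq_nonneg _)
  rw [Finset.sum_add_distrib] at key
  linarith


def Amap (n m : ℕ) (wq : ℝ) (α : Fin m → ℝ) (P : Fin n → Fin m → Prop)
    [∀ i j, Decidable (P i j)] :
    ((Fin n → Fin m → ℝ) × (Fin n → ℝ)) →ₗ[ℝ] ((Fin n → Fin m → ℝ) × (Fin n → ℝ)) where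
  toFun x := (fun i j => if P i j then (wq / α j) * ((∑ k, x.1 k j) + x.1 i j) - x.2 i
                else x.1 i j,
              fun i => ∑ j, x.1 i j)
  map_add' x y := by
    refine Prod.ext ?_ ?_
    · funext i j
      simp only [Prod.fst_add, Prod.snd_add, Pi.add_apply, Finset.sum_add_distrib]
      split <;> ring
    · funext i
      simp [Finset.sum_add_distrib]
  map_smul' c x := by
    refine Prod.ext ?_ ?_
    · funext i j
      simp only [Prod.smul_fst, Prod.smul_snd, Pi.smul_apply, smul_eq_mul, ← Finset.mul_sum,
        RingHom.id_apply]
      split <;> ring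
    · funext i
      simp [Finset.mul_sum]

lemma Amap_apply_fst (n m : ℕ) (wq : ℝ) (α : Fin m → ℝ) (P : Fin n → Fin m → Prop)
    [∀ i j, Decidable (P i j)] (x : (Fin n → Fin m → ℝ) × (Fin n → ℝ)) (i : Fin n) (j : Fin m) :
    (Amap n m wq α P x).1 i j
      = if P i j then (wq / α j) * ((∑ k, x.1 k j) + x.1 i j) - x.2 i else x.1 i j := rfl

lemma Amap_apply_snd (n m : ℕ) (wq : ℝ) (α : Fin m → ℝ) (P : Fin n → Fin m → Prop)
    [∀ i j, Decidable (P i j)] (x : (Fin n → Fin m → ℝ) × (Fin n → ℝ)) (i : Fin n) :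
    (Amap n m wq α P x).2 i = ∑ j, x.1 i j := rfl

lemma Amap_inj {n m : ℕ} (wq : ℝ) (hwq : 0 < wq) (α : Fin m → ℝ) (hα : ∀ j, 0 < α j)
    (P : Fin n → Fin m → Prop) [∀ i j, Decidable (P i j)] (hP : ∀ i, ∃ j, P i j) :
    Function.Injective (Amap n m wq α P) := by
  have key : ∀ z, Amap n m wq α P z = 0 → z = 0 := by
    intro z hz
    have hz1 : ∀ i j, (if P i j then (wq / α j) * ((∑ k, z.1 k j) + z.1 i j) - z.2 i
        else z.1 i j) = 0 := by
      intro i j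
      rw [← Amap_apply_fst n m wq α P z i j, hz]; rfl
    have hz2 : ∀ i, ∑ j, z.1 i j = 0 := by
      intro i
      rw [← Amap_apply_snd n m wq α P z i, hz]; rfl
    have hzero : ∀ i j, ¬ P i j → z.1 i j = 0 := by
      intro i j h; have := hz1 i j; rwa [if_neg h] at this
    have heqP : ∀ i j, P i j → (wq / α j) * ((∑ k, z.1 k j) + z.1 i j) = z.2 i := by
      intro i j h; have := hz1 i j; rw [if_pos h] at this; linarith
    have hInner : ∀ i, ∑ j, z.1 i j * ((wq / α j) * ((∑ k, z.1 k j) + z.1 i j)) = 0 := by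
      intro i
      have e : ∀ j, z.1 i j * ((wq / α j) * ((∑ k, z.1 k j) + z.1 i j))
          = z.1 i j * z.2 i := by
        intro j
        by_cases h : P i j
        · rw [heqP i j h]
        · rw [hzero i j h]; ring
      rw [Finset.sum_congr rfl fun j _ => e j, ← Finset.sum_mul, hz2, zero_mul]
    have htot : ∑ j, (wq / α j) * ((∑ k, z.1 k j) ^ 2 + ∑ k, (z.1 k j) ^ 2) = 0 := by
      have h0 : ∑ i, ∑ j, z.1 i j * ((wq / α j) * ((∑ k, z.1 k j) + z.1 i j)) = 0 :=
        Finset.sum_eq_zero fun i _ => hInner i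
      rw [Finset.sum_comm] at h0
      rw [← h0]
      refine Finset.sum_congr rfl fun j _ => ?_
      have e : ∀ i, z.1 i j * ((wq / α j) * ((∑ k, z.1 k j) + z.1 i j))
          = (wq / α j) * (∑ k, z.1 k j) * z.1 i j + (wq / α j) * (z.1 i j) ^ 2 := by
        intro i; ring
      rw [Finset.sum_congr rfl fun i _ => e i, Finset.sum_add_distrib,
        ← Finset.mul_sum, ← Finset.mul_sum]
      ring
    have hq : ∀ j : Fin m, 0 < wq / α j := fun j => div_pos hwq (hα j)
    have hterm : ∀ j : Fin m, (∑ k, z.1 k j) ^ 2 + ∑ k, (z.1 k j) ^ 2 = 0 := by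
      intro j
      have hnn : ∀ j' : Fin m, j' ∈ Finset.univ →
          0 ≤ (wq / α j') * ((∑ k, z.1 k j') ^ 2 + ∑ k, (z.1 k j') ^ 2) := by
        intro j' _
        exact mul_nonneg (hq j').le
          (add_nonneg (sq_nonneg _) (Finset.sum_nonneg fun k _ => sq_nonneg _))
      have := (Finset.sum_eq_zero_iff_of_nonneg hnn).1 htot j (Finset.mem_univ j)
      exact (mul_eq_zero.1 this).resolve_left (ne_of_gt (hq j))
    have hz1zero : ∀ i j, z.1 i j = 0 := by
      intro i j
      have hsq : ∑ k, (z.1 k j) ^ 2 = 0 := by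
        have h1 : 0 ≤ (∑ k, z.1 k j) ^ 2 := sq_nonneg _
        have h2 : 0 ≤ ∑ k, (z.1 k j) ^ 2 := Finset.sum_nonneg fun k _ => sq_nonneg _
        nlinarith [hterm j]
      have := (Finset.sum_eq_zero_iff_of_nonneg
        (fun k _ => sq_nonneg (z.1 k j))).1 hsq i (Finset.mem_univ i)
      exact pow_eq_zero_iff (by norm_num) |>.1 this
    have hz2zero : ∀ i, z.2 i = 0 := by
      intro i
      obtain ⟨j, hj⟩ := hP i
      have := heqP i j hj
      have hsum0 : ∑ k, z.1 k j = 0 := Finset.sum_eq_zero fun k _ => hz1zero k j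
      rw [hsum0, hz1zero i j] at this
      simpa using this.symm
    refine Prod.ext ?_ ?_
    · funext i j; exact hz1zero i j
    · funext i; exact hz2zero i
  intro x y hxy
  have := key (x - y) (by rw [map_sub, hxy, sub_self])
  exact sub_eq_zero.1 this


theorem equilibrium_map_contDiff_at_nondegenerate (n m : ℕ)
    (wp wd : ℝ) (wq : ℝ) (hwq : 0 < wq)
    (b : Fin m → ℝ) (α : Fin m → ℝ) (hα : ∀ j, 0 < α j)
    (d : Fin n → Fin m → ℝ) (D : Fin n → ℝ) (hD : ∀ i, 0 < D i)
    (Feq : (Fin m → ℝ) → Fin n → Fin m → ℝ)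
    (hNE : ∀ p : Fin m → ℝ,
      (∀ i, Feq p i ∈ simplex (D i)) ∧
      ∀ i : Fin n, ∀ g ∈ simplex (D i),
        cost wp wq wd p b α d (Feq p) i ≤
          cost wp wq wd p b α d (Function.update (Feq p) i g) i)
    (huniq : ∀ p : Fin m → ℝ, ∀ G : Fin n → Fin m → ℝ,
      (∀ i, G i ∈ simplex (D i)) →
      (∀ i : Fin n, ∀ g ∈ simplex (D i),
        cost wp wq wd p b α d G i ≤
          cost wp wq wd p b α d (Function.update G i g) i) →
      G = Feq p)
    (p₀ : Fin m → ℝ)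
    (hstrict : ∀ i : Fin n, ∃ lam : ℝ, ∀ j : Fin m,
      (0 < Feq p₀ i j → marginal wp wq wd p₀ b α d (Feq p₀) i j = lam) ∧
      (Feq p₀ i j = 0 → lam < marginal wp wq wd p₀ b α d (Feq p₀) i j)) :
    ∃ U : Set (Fin m → ℝ), IsOpen U ∧ p₀ ∈ U ∧ ContDiffOn ℝ 1 Feq U := by
  classical
  set P : Fin n → Fin m → Prop := fun i j => 0 < Feq p₀ i j with hPdef
  have hPne : ∀ i, ∃ j, P i j := by
    intro i
    by_contra h
    push_neg at h
    have h0 : ∀ j, Feq p₀ i j = 0 := fun j =>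
      le_antisymm (not_lt.1 (h j)) (((hNE p₀).1 i).1 j)
    have hsum := ((hNE p₀).1 i).2
    rw [Finset.sum_eq_zero fun j _ => h0 j] at hsum
    exact absurd hsum.symm (ne_of_gt (hD i))
  set A := Amap n m wq α P with hAdef
  have hinj : Function.Injective A := Amap_inj wq hwq α hα P hPne
  have hsurj : Function.Surjective A := LinearMap.injective_iff_surjective.1 hinj
  set e : ((Fin n → Fin m → ℝ) × (Fin n → ℝ)) ≃ₗ[ℝ] ((Fin n → Fin m → ℝ) × (Fin n → ℝ)) :=
    LinearEquiv.ofBijective A ⟨hinj, hsurj⟩ with hedef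
  set c : (Fin m → ℝ) → ((Fin n → Fin m → ℝ) × (Fin n → ℝ)) :=
    fun p => (fun i j => if P i j then b j - wd * d i j - wp * p j else 0, D) with hcdef
  set φ : (Fin m → ℝ) → ((Fin n → Fin m → ℝ) × (Fin n → ℝ)) :=
    fun p => e.symm (c p) with hφdef
  have hsolve : ∀ p, A (φ p) = c p := fun p => e.apply_symm_apply (c p)
  -- component equations of the linear system
  have heq1 : ∀ p (i : Fin n) (j : Fin m), P i j →
      marginal wp wq wd p b α d ((φ p).1) i j = (φ p).2 i := by
    intro p i j hij
    have h := congrFun (congrFun (congrArg Prod.fst (hsolve p)) i) j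
    rw [Amap_apply_fst, if_pos hij] at h
    have h2 : (c p).1 i j = b j - wd * d i j - wp * p j := by
      simp only [hcdef, if_pos hij]
    rw [h2] at h
    unfold marginal
    linarith
  have heq2 : ∀ p (i : Fin n) (j : Fin m), ¬ P i j → (φ p).1 i j = 0 := by
    intro p i j hij
    have h := congrFun (congrFun (congrArg Prod.fst (hsolve p)) i) j
    rw [Amap_apply_fst, if_neg hij] at h
    have h2 : (c p).1 i j = 0 := by simp only [hcdef, if_neg hij]
    rw [h2] at h
    exact h
  have heq3 : ∀ p (i : Fin n), ∑ j, (φ p).1 i j = D i := by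
    intro p i
    have h := congrFun (congrArg Prod.snd (hsolve p)) i
    rw [Amap_apply_snd] at h
    exact h
  -- the value at p₀
  choose lam hlam using hstrict
  have hA0 : A (Feq p₀, lam) = c p₀ := by
    refine Prod.ext ?_ ?_
    · funext i j
      rw [Amap_apply_fst]
      by_cases hij : P i j
      · rw [if_pos hij]
        have hm := (hlam i j).1 hij
        unfold marginal at hm
        have h2 : (c p₀).1 i j = b j - wd * d i j - wp * p₀ j := by
          simp only [hcdef, if_pos hij]
        rw [h2]
        linarith
      · rw [if_neg hij]
        have h0 : Feq p₀ i j = 0 :=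
          le_antisymm (not_lt.1 hij) (((hNE p₀).1 i).1 j)
        have h2 : (c p₀).1 i j = 0 := by simp only [hcdef, if_neg hij]
        rw [h2]; exact h0
    · funext i
      rw [Amap_apply_snd]
      exact ((hNE p₀).1 i).2
  have hφ0 : φ p₀ = (Feq p₀, lam) := hinj (by rw [hsolve p₀, hA0])
  -- smoothness of φ
  have hcD : ContDiff ℝ (1 : ℕ∞) c := by
    refine ContDiff.prodMk ?_ contDiff_const
    refine contDiff_pi.2 fun i => contDiff_pi.2 fun j => ?_
    by_cases hij : P i j
    · simp only [hcdef, if_pos hij]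
      exact contDiff_const.sub (contDiff_const.mul (ContinuousLinearMap.proj (R := ℝ) (φ := fun _ : Fin m => ℝ) j).contDiff)
    · simp only [hcdef, if_neg hij]
      exact contDiff_const
  have hφD : ContDiff ℝ (1 : ℕ∞) φ := by
    have hsym : ContDiff ℝ (1 : ℕ∞) fun x : ((Fin n → Fin m → ℝ) × (Fin n → ℝ)) =>
        e.symm x := (e.symm.toLinearMap.toContinuousLinearMap).contDiff
    exact hsym.comp hcD
  have hφcont : Continuous φ := hφD.continuous
  have hc1 : ∀ (i : Fin n) (j : Fin m), Continuous fun p => (φ p).1 i j := fun i j =>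
    (continuous_apply j).comp ((continuous_apply i).comp (continuous_fst.comp hφcont))
  have hc2 : ∀ i : Fin n, Continuous fun p => (φ p).2 i := fun i =>
    (continuous_apply i).comp (continuous_snd.comp hφcont)
  have hMcont : ∀ (i : Fin n) (j : Fin m),
      Continuous fun p => marginal wp wq wd p b α d ((φ p).1) i j := by
    intro i j
    unfold marginal
    have hsumc : Continuous fun p => ∑ k, (φ p).1 k j :=
      continuous_finset_sum _ fun k _ => hc1 k j
    exact (((continuous_const.mul (continuous_apply j)).add continuous_const).sub
      continuous_const).add (continuous_const.mul (hsumc.add (hc1 i j)))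
  -- the neighborhood
  set V : Fin n → Fin m → Set (Fin m → ℝ) := fun i j =>
    if P i j then {p | 0 < (φ p).1 i j}
    else {p | (φ p).2 i < marginal wp wq wd p b α d ((φ p).1) i j} with hVdef
  refine ⟨⋂ i, ⋂ j, V i j, ?_, ?_, ?_⟩
  · refine isOpen_iInter_of_finite fun i => isOpen_iInter_of_finite fun j => ?_
    by_cases hij : P i j
    · simpa only [hVdef, if_pos hij] using isOpen_lt continuous_const (hc1 i j)
    · simpa only [hVdef, if_neg hij] using isOpen_lt (hc2 i) (hMcont i j)
  · refine Set.mem_iInter.2 fun i => Set.mem_iInter.2 fun j => ?_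
    by_cases hij : P i j
    · simp only [hVdef, if_pos hij, Set.mem_setOf_eq, hφ0]
      exact hij
    · simp only [hVdef, if_neg hij, Set.mem_setOf_eq, hφ0]
      have h0 : Feq p₀ i j = 0 :=
        le_antisymm (not_lt.1 hij) (((hNE p₀).1 i).1 j)
      exact (hlam i j).2 h0
  · have hφ1 : ContDiff ℝ 1 fun p => (φ p).1 :=
      contDiff_fst.comp hφD
    refine hφ1.contDiffOn.congr fun p hp => ?_
    -- extract membership facts
    have hmem : ∀ (i : Fin n) (j : Fin m), p ∈ V i j := fun i j =>
      Set.mem_iInter.1 (Set.mem_iInter.1 hp i) j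
    have hmempos : ∀ (i : Fin n) (j : Fin m), P i j → 0 < (φ p).1 i j := by
      intro i j hij
      simpa only [hVdef, if_pos hij, Set.mem_setOf_eq] using hmem i j
    have hmemlt : ∀ (i : Fin n) (j : Fin m), ¬ P i j →
        (φ p).2 i < marginal wp wq wd p b α d ((φ p).1) i j := by
      intro i j hij
      simpa only [hVdef, if_neg hij, Set.mem_setOf_eq] using hmem i j
    have hnn : ∀ (i : Fin n) (j : Fin m), 0 ≤ (φ p).1 i j := by
      intro i j
      by_cases hij : P i j
      · exact (hmempos i j hij).le
      · rw [heq2 p i j hij]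
    have hsimp : ∀ i, (φ p).1 i ∈ simplex (D i) := fun i => ⟨hnn i, heq3 p i⟩
    have hbest : ∀ i : Fin n, ∀ g ∈ simplex (D i),
        cost wp wq wd p b α d ((φ p).1) i ≤
          cost wp wq wd p b α d (Function.update ((φ p).1) i g) i := by
      intro i g hg
      refine kkt_best wp wd wq hwq.le p b α hα d ((φ p).1) i ((φ p).2 i)
        ?_ ?_ (hnn i) g hg.1 ?_
      · intro j
        by_cases hij : P i j
        · exact (heq1 p i j hij).ge
        · exact (hmemlt i j hij).le
      · intro j hj
        by_cases hij : P i j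
        · exact heq1 p i j hij
        · exact absurd (heq2 p i j hij) (ne_of_gt hj)
      · rw [hg.2, heq3 p i]
    exact (huniq p ((φ p).1) hsimp hbest).symm


end PriLLM
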